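/- Let θ = 0, and let ε be a complex number satisfying either Re ε > 0 and ε⁻¹ ∉ ℤ, or Re ε = 0 and Im ε > 0. Set f(m,n) = −n(1+εn)/(1+ε(m+n)) for m,n ∈ ℤ. Suppose g: ℤ×ℤ → ℂ, h: ℤ×ℤ → ℂ, d: ℤ×ℤ → ℂ satisfy, for all m,n,r,s,t ∈ ℤ: g(m,r) − h(r,m) = m/2 − r; d(r,s) + d(s,r) = 2; (m−n)g(m+n,r) = g(n,r)g(m,n+r) − g(m,r)g(n,m+r); (m/2−r)h(m+r,n) = h(r,n)g(m,n+r) − f(m,n)h(r,m+n); (m/2−r)d(m+r,s) = d(r,s)f(m,r+s) − g(m,s)d(r,m+s); 2f(r+s,m) = h(s,m)d(r,m+s) + h(r,m)d(s,m+r); 2g(r+s,t) = d(s,t)h(r,s+t) + d(r,t)h(s,r+t). Then necessarily g(m,r) = −(m/2+r)(1+2εr)/(1+2ε(m+r)), h(r,m) = −m(1+εm)/(1+2ε(m+r)), and d(r,s) = (1+2εs)/(1+ε(r+s)) for all m,r,s ∈ ℤ. -/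

import Mathlib

/-- f(m,n) = −n(1+εn)/(1+ε(m+n)) -/
noncomputable def vf (ε m n : ℂ) : ℂ := -n * (1 + ε * n) / (1 + ε * (m + n))

/-- g(m,r) = −(m/2+r)(1+2εr)/(1+2ε(m+r)) -/
noncomputable def vg (ε m r : ℂ) : ℂ :=
  -(m / 2 + r) * (1 + 2 * ε * r) / (1 + 2 * ε * (m + r))

/-- h(r,m) = −m(1+εm)/(1+2ε(m+r)) -/
noncomputable def vh (ε r m : ℂ) : ℂ := -m * (1 + ε * m) / (1 + 2 * ε * (m + r))

/-- d(r,s) = (1+2εs)/(1+ε(r+s)) -/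
noncomputable def vd (ε r s : ℂ) : ℂ := (1 + 2 * ε * s) / (1 + ε * (r + s))

/-- normalized h -/
noncomputable def wnf (ε : ℂ) (h : ℤ → ℤ → ℂ) (a b : ℤ) : ℂ :=
  h a b * (1 + 2 * ε * ((a : ℂ) + (b : ℂ))) / (-(b : ℂ) * (1 + ε * (b : ℂ)))

/-- uniqueness part of Theorem 3.2 in the Ramond case θ = 0:
any solution (g,h,d) of equations (3.2)–(3.3) with f given by (3.4) is the one of
equation (3.5). -/
theorem super_virasoro_uniqueness_Ramond (ε : ℂ)
    (hε : (0 < ε.re ∧ ∀ k : ℤ, ε⁻¹ ≠ (k : ℂ)) ∨ (ε.re = 0 ∧ 0 < ε.im))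
    (g h d : ℤ → ℤ → ℂ)
    (h1 : ∀ m r : ℤ, g m r - h r m = (m : ℂ) / 2 - (r : ℂ))
    (h2 : ∀ r s : ℤ, d r s + d s r = 2)
    (h3 : ∀ m n r : ℤ,
      ((m : ℂ) - (n : ℂ)) * g (m + n) r
        = g n r * g m (n + r) - g m r * g n (m + r))
    (h4 : ∀ m n r : ℤ,
      ((m : ℂ) / 2 - (r : ℂ)) * h (m + r) n
        = h r n * g m (n + r) - vf ε m n * h r (m + n))
    (h5 : ∀ m r s : ℤ,
      ((m : ℂ) / 2 - (r : ℂ)) * d (m + r) s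
        = d r s * vf ε m ((r : ℂ) + (s : ℂ)) - g m s * d r (m + s))
    (h6 : ∀ m r s : ℤ,
      2 * vf ε ((r : ℂ) + (s : ℂ)) m
        = h s m * d r (m + s) + h r m * d s (m + r))
    (h7 : ∀ r s t : ℤ,
      2 * g (r + s) t = d s t * h r (s + t) + d r t * h s (r + t)) :
    ∀ m r s : ℤ,
      g m r = vg ε m r ∧ h r m = vh ε r m ∧ d r s = vd ε r s := by
  -- ε is nonzero
  have hε0 : ε ≠ 0 := by
    rcases hε with ⟨hre, _⟩ | ⟨hre, him⟩
    · intro he; rw [he] at hre; simp at hre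
    · intro he; rw [he] at him; simp at him
  -- 1 + εk ≠ 0 for every integer k
  have hA : ∀ k : ℤ, (1:ℂ) + ε * k ≠ 0 := by
    intro k hk
    rcases hε with ⟨hre, hint⟩ | ⟨hre, _⟩
    · have hk0 : (k : ℂ) ≠ 0 := by
        intro h0; rw [h0] at hk; simp at hk
      have : ε⁻¹ = -(k : ℂ) := by
        field_simp
        linear_combination hk
      exact hint (-k) (by push_cast; exact this)
    · have := congrArg Complex.re hk
      simp [Complex.add_re, Complex.mul_re, hre] at this
  -- 1 + 2εk ≠ 0 for every integer k
  have hB : ∀ k : ℤ, (1:ℂ) + 2 * ε * k ≠ 0 := by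
    intro k hk
    exact hA (2 * k) (by push_cast; linear_combination hk)
  -- d r r = 1
  have drr : ∀ r : ℤ, d r r = 1 := by
    intro r; linear_combination (h2 r r) / 2
  -- g 0 s = -s
  have g0 : ∀ s : ℤ, g 0 s = -(s : ℂ) := by
    intro s
    have e := h5 0 s s
    rw [show ((0:ℤ) + s) = s by ring] at e
    rw [drr s] at e
    simp only [vf] at e
    push_cast at e
    have hd : (1:ℂ) + ε * ((s:ℂ) + s) ≠ 0 := by
      have := hA (2 * s); push_cast at this
      intro hc; apply this; linear_combination hc
    ring_nf at e hd
    field_simp [hd] at e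
    apply mul_left_cancel₀ hd
    linear_combination e
  -- h r 0 = 0
  have hr0 : ∀ r : ℤ, h r 0 = 0 := by
    intro r
    have e := h1 0 r
    push_cast at e
    linear_combination g0 r - e
  -- g in terms of h
  have hgh : ∀ m r : ℤ, g m r = h r m + (m : ℂ) / 2 - r := by
    intro m r; linear_combination h1 m r
  -- relation A : h r m * d r (m+r) * (1 + ε(m+2r)) = -m(1+εm)
  have relA : ∀ r m : ℤ, h r m * d r (m + r) * (1 + ε * ((m:ℂ) + 2 * r))
      = -(m:ℂ) * (1 + ε * m) := by
    intro r m
    have e := h6 m r r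
    simp only [vf] at e
    push_cast at e
    have hd : (1:ℂ) + ε * ((r:ℂ) + r + m) ≠ 0 := by
      have := hA (m + 2 * r); push_cast at this
      intro hc; apply this; linear_combination hc
    ring_nf at e hd
    field_simp [hd] at e
    linear_combination -e
  -- h r m ≠ 0 for m ≠ 0
  have hne0 : ∀ r m : ℤ, m ≠ 0 → h r m ≠ 0 := by
    intro r m hm h0
    have e := relA r m
    rw [h0] at e
    have : (m:ℂ) = 0 ∨ (1 + ε * (m:ℂ)) = 0 := by
      apply mul_eq_zero.mp; linear_combination e
    rcases this with hc | hc
    · exact hm (by exact_mod_cast hc)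
    · exact hA m hc
  -- g (-(2p)) p = 0
  have g2neg : ∀ p : ℤ, g (-(2 * p)) p = 0 := by
    intro p
    have e := h7 (-p) (-p) p
    rw [show (-p + -p : ℤ) = -(2 * p) by ring, show (-p + p : ℤ) = 0 by ring] at e
    rw [hr0 (-p)] at e
    linear_combination e / 2
  -- h s (-(2s)) = 2s
  have hs2s : ∀ s : ℤ, h s (-(2 * s)) = 2 * (s:ℂ) := by
    intro s
    have e := hgh (-(2 * s)) s
    rw [g2neg s] at e
    push_cast at e
    linear_combination -e
  -- d s (-s) = 1 - 2εs
  have dss : ∀ s : ℤ, d s (-s) = 1 - 2 * ε * s := by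
    intro s
    by_cases hs : s = 0
    · subst hs
      rw [show (-(0:ℤ)) = 0 by ring, drr 0]
      push_cast; ring
    · have e := relA s (-(2 * s))
      rw [show (-(2 * s) + s : ℤ) = -s by ring, hs2s s] at e
      push_cast at e
      have h2s : (2 * (s:ℂ)) ≠ 0 := by
        simp [Int.cast_ne_zero.mpr hs]
      apply mul_left_cancel₀ h2s
      linear_combination e
  -- relation X : (1-2εr) h(-n-r) n + (1+2ε(n+r)) h r n = -2n(1+εn)
  have relX : ∀ r n : ℤ, (1 - 2 * ε * r) * h (-n - r) n
      + (1 + 2 * ε * ((n:ℂ) + r)) * h r n = -2 * n * (1 + ε * n) := by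
    intro r n
    have e := h6 n r (-n - r)
    rw [show (n + (-n - r) : ℤ) = -r by ring] at e
    rw [show (n + r : ℤ) = -(-n - r) by ring] at e
    rw [dss r, dss (-n - r)] at e
    simp only [vf] at e
    push_cast at e
    have hd : (1:ℂ) + ε * ((r:ℂ) + (-(n:ℂ) - r) + n) ≠ 0 := by
      rw [show ((r:ℂ) + (-(n:ℂ) - r) + n) = 0 by ring]
      simp
    field_simp [hd] at e
    linear_combination -e
  -- relation Z : (n+2r)(1-ε(n+2r)) h(-(2n)-r) n = -n(1+εn) h r (-n-2r)
  have relZ : ∀ r n : ℤ, ((n:ℂ) + 2 * r) * (1 - ε * ((n:ℂ) + 2 * r)) * h (-(2 * n) - r) n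
      = -(n:ℂ) * (1 + ε * n) * h r (-n - 2 * r) := by
    intro r n
    have e := h4 (-2 * (n + r)) n r
    rw [show (-2 * (n + r) + r : ℤ) = -(2 * n) - r by ring] at e
    rw [show (-2 * (n + r) + n : ℤ) = -n - 2 * r by ring] at e
    rw [show (-2 * (n + r) : ℤ) = -(2 * (n + r)) by ring] at e
    rw [g2neg (n + r)] at e
    simp only [vf] at e
    push_cast at e
    have hd : (1:ℂ) + ε * (-(2 * ((n:ℂ) + r)) + n) ≠ 0 := by
      have := hA (-(n + 2 * r)); push_cast at this
      intro hc; apply this; linear_combination hc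
    field_simp [hd] at e
    linear_combination -e
  -- relation P : -m(1+εm) h(m+r)(-m) + m(1-εm) h r m = 2(1+ε(m+2r)) (h r m)(h (m+r) (-m))
  have relP : ∀ r m : ℤ, -(m:ℂ) * (1 + ε * m) * h (m + r) (-m)
      + (m:ℂ) * (1 - ε * m) * h r m
      = 2 * (1 + ε * ((m:ℂ) + 2 * r)) * h r m * h (m + r) (-m) := by
    intro r m
    have e1 := relA r m
    have e2 := relA (m + r) (-m)
    rw [show (-m + (m + r) : ℤ) = r by ring] at e2
    push_cast at e2
    have e3 := h2 r (m + r)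
    linear_combination -(h (m + r) (-m)) * e1 - (h r m) * e2
      + (1 + ε * ((m:ℂ) + 2 * r)) * (h r m) * (h (m + r) (-m)) * e3
  -- w is nonzero off the axis b = 0
  have wne : ∀ a b : ℤ, b ≠ 0 → wnf ε h a b ≠ 0 := by
    intro a b hb
    unfold wnf
    apply div_ne_zero
    · apply mul_ne_zero (hne0 a b hb)
      have := hB (a + b); push_cast at this; exact this
    · apply mul_ne_zero
      · simp [Int.cast_ne_zero.mpr hb]
      · exact hA b
  -- w-form of relation X
  have wX : ∀ r n : ℤ, n ≠ 0 → wnf ε h r n + wnf ε h (-n - r) n = 2 := by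
    intro r n hn
    have e := relX r n
    unfold wnf
    push_cast
    have hn' : (n:ℂ) ≠ 0 := Int.cast_ne_zero.mpr hn
    have h1' := hA n
    field_simp
    linear_combination -e
  -- product form of the definition of w
  have wmul : ∀ a b : ℤ, wnf ε h a b * (-(b:ℂ) * (1 + ε * (b:ℂ)))
      = h a b * (1 + 2 * ε * ((a:ℂ) + (b:ℂ))) := by
    intro a b
    by_cases hb : b = 0
    · subst hb; rw [hr0 a]; push_cast; ring
    · unfold wnf
      rw [div_mul_cancel₀]
      apply mul_ne_zero
      · simp [Int.cast_ne_zero.mpr hb]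
      · exact hA b
  have Dne : ∀ b : ℤ, b ≠ 0 → (-(b:ℂ) * (1 + ε * (b:ℂ))) ≠ 0 := by
    intro b hb
    apply mul_ne_zero
    · simp [Int.cast_ne_zero.mpr hb]
    · exact hA b
  -- w-form of the orbit relation
  have wO : ∀ a b : ℤ, b ≠ 0 → 2 * a + 3 * b ≠ 0 →
      wnf ε h a b = wnf ε h (-a - 2 * b) (2 * a + 3 * b) := by
    intro a b hb hc
    have wm1 := wmul a b
    have wm2 := wmul (-a - 2 * b) (2 * a + 3 * b)
    push_cast at wm2
    have e := relZ (-a - 2 * b) b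
    rw [show (-(2 * b) - (-a - 2 * b) : ℤ) = a by ring] at e
    rw [show (-b - 2 * (-a - 2 * b) : ℤ) = 2 * a + 3 * b by ring] at e
    push_cast at e
    have hcC : 2 * (a:ℂ) + 3 * (b:ℂ) ≠ 0 := by
      have := Int.cast_ne_zero (α := ℂ) |>.mpr hc; push_cast at this; exact this
    have hD1 : (-(b:ℂ) * (1 + ε * (b:ℂ))) ≠ 0 := Dne b hb
    have hD2 : (-(2 * (a:ℂ) + 3 * (b:ℂ)) * (1 + ε * (2 * (a:ℂ) + 3 * (b:ℂ)))) ≠ 0 := by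
      apply mul_ne_zero (neg_ne_zero.mpr hcC)
      have := hA (2 * a + 3 * b); push_cast at this; exact this
    have key : (wnf ε h a b - wnf ε h (-a - 2 * b) (2 * a + 3 * b))
        * ((-(b:ℂ) * (1 + ε * (b:ℂ))) * (-(2 * (a:ℂ) + 3 * (b:ℂ)) * (1 + ε * (2 * (a:ℂ) + 3 * (b:ℂ))))) = 0 := by
      linear_combination (-(2 * (a:ℂ) + 3 * b) * (1 + ε * (2 * (a:ℂ) + 3 * b))) * wm1
        - (-(b:ℂ) * (1 + ε * (b:ℂ))) * wm2 + (1 + 2 * ε * ((a:ℂ) + b)) * e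
    rcases mul_eq_zero.mp key with hk | hk
    · exact sub_eq_zero.mp hk
    · exact absurd hk (mul_ne_zero hD1 hD2)
  -- w-form of relation P
  have wP : ∀ r m : ℤ, m ≠ 0 →
      (1 + 2 * ε * ((m:ℂ) + r)) * wnf ε h (m + r) (-m)
        + (1 + 2 * ε * (r:ℂ)) * wnf ε h r m
      = (2 + 2 * ε * ((m:ℂ) + 2 * r)) * wnf ε h r m * wnf ε h (m + r) (-m) := by
    intro r m hm
    have hm' : (m:ℂ) ≠ 0 := Int.cast_ne_zero.mpr hm
    have wm1 := wmul r m
    have wm2 := wmul (m + r) (-m)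
    push_cast at wm2
    have e := relP r m
    have hD1 : (-(m:ℂ) * (1 + ε * (m:ℂ))) ≠ 0 := Dne m hm
    have hD2 : ((m:ℂ) * (1 - ε * (m:ℂ))) ≠ 0 := by
      apply mul_ne_zero hm'
      have := hA (-m); push_cast at this
      intro hz; apply this; linear_combination hz
    have key : ((1 + 2 * ε * ((m:ℂ) + r)) * wnf ε h (m + r) (-m)
        + (1 + 2 * ε * (r:ℂ)) * wnf ε h r m
        - (2 + 2 * ε * ((m:ℂ) + 2 * r)) * wnf ε h r m * wnf ε h (m + r) (-m))
        * ((-(m:ℂ) * (1 + ε * (m:ℂ))) * ((m:ℂ) * (1 - ε * (m:ℂ)))) = 0 := by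
      linear_combination
        ((1 + 2 * ε * ((m:ℂ) + r)) * (-(m:ℂ) * (1 + ε * (m:ℂ)))
          - (2 + 2 * ε * ((m:ℂ) + 2 * r)) * h r m * (1 + 2 * ε * ((r:ℂ) + m))) * wm2
        + ((1 + 2 * ε * (r:ℂ)) * ((m:ℂ) * (1 - ε * (m:ℂ)))
          - (2 + 2 * ε * ((m:ℂ) + 2 * r)) * wnf ε h (m + r) (-m) * ((m:ℂ) * (1 - ε * (m:ℂ)))) * wm1
        + ((1 + 2 * ε * ((r:ℂ) + m)) * (1 + 2 * ε * (r:ℂ))) * e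
    rcases mul_eq_zero.mp key with hk | hk
    · linear_combination hk
    · exact absurd hk (mul_ne_zero hD1 hD2)
  -- the key quadratic relation for W = w(σ-c, c)
  have wQ : ∀ σ c : ℤ, c ≠ 0 →
      (wnf ε h (σ - c) c - 1) *
        (((1 + 2*ε*((σ:ℂ)-c))^2 - 2*(1 + 2*ε*((σ:ℂ)-c)) + (1 + 2*ε*(σ:ℂ))^2
            + 2*(1 + 2*ε*(σ:ℂ))*(1 + 2*ε*((σ:ℂ)-c)) - 6*(1 + 2*ε*(σ:ℂ))) * wnf ε h (σ - c) c
          + (8*(1 + 2*ε*(σ:ℂ)) - 2*(1 + 2*ε*(σ:ℂ))*(1 + 2*ε*((σ:ℂ)-c)) - 2*(1 + 2*ε*(σ:ℂ))^2)) = 0 := by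
    intro σ c hc
    have hcn : (-c : ℤ) ≠ 0 := neg_ne_zero.mpr hc
    have e1 := wX (σ - c) c hc
    rw [show (-c - (σ - c) : ℤ) = -σ by ring] at e1
    have e2 := wX (c - σ) (-c) hcn
    rw [show (-(-c) - (c - σ) : ℤ) = σ by ring] at e2
    have e3 := wP (-σ) c hc
    rw [show (c + -σ : ℤ) = c - σ by ring] at e3
    push_cast at e3
    have e4 := wP (σ - c) c hc
    rw [show (c + (σ - c) : ℤ) = σ by ring] at e4
    push_cast at e4
    linear_combination
      ((1 + 2*ε*(σ:ℂ)) - ((1 + 2*ε*(σ:ℂ)) + (1 + 2*ε*((σ:ℂ)-c))) * wnf ε h (σ - c) c) * e3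
      + ((2 - (1 + 2*ε*((σ:ℂ)-c))) - (4 - (1 + 2*ε*(σ:ℂ)) - (1 + 2*ε*((σ:ℂ)-c))) * (2 - wnf ε h (σ - c) c)) * e4
      - ((1 + 2*ε*(σ:ℂ)) - ((1 + 2*ε*(σ:ℂ)) + (1 + 2*ε*((σ:ℂ)-c))) * wnf ε h (σ - c) c)
        * ((2 - (1 + 2*ε*(σ:ℂ))) - (4 - (1 + 2*ε*(σ:ℂ)) - (1 + 2*ε*((σ:ℂ)-c))) * wnf ε h (c - σ) (-c)) * e1
      - ((2 - (1 + 2*ε*((σ:ℂ)-c))) - (4 - (1 + 2*ε*(σ:ℂ)) - (1 + 2*ε*((σ:ℂ)-c))) * (2 - wnf ε h (σ - c) c))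
        * ((1 + 2*ε*(σ:ℂ)) - ((1 + 2*ε*(σ:ℂ)) + (1 + 2*ε*((σ:ℂ)-c))) * wnf ε h (σ - c) c) * e2
  -- main step : w = 1 on every line σ ≠ 0
  have main : ∀ σ b : ℤ, b ≠ 0 → σ ≠ 0 → wnf ε h (σ - b) b = 1 := by
    intro σ b hb hσ
    have step : ∀ c : ℤ, c ≠ 0 → c + 2*σ ≠ 0 →
        wnf ε h (σ - c) c = wnf ε h (σ - (c + 2*σ)) (c + 2*σ) := by
      intro c hc hc2
      have e := wO (σ - c) c hc (by omega)
      rw [show (-(σ - c) - 2*c : ℤ) = σ - (c + 2*σ) by ring,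
        show (2*(σ - c) + 3*c : ℤ) = c + 2*σ by ring] at e
      exact e
    have triple : ∃ c : ℤ, c ≠ 0 ∧ c + 2*σ ≠ 0 ∧ c + 4*σ ≠ 0 ∧
        wnf ε h (σ - c) c = wnf ε h (σ - b) b ∧
        wnf ε h (σ - (c + 2*σ)) (c + 2*σ) = wnf ε h (σ - b) b ∧
        wnf ε h (σ - (c + 4*σ)) (c + 4*σ) = wnf ε h (σ - b) b := by
      by_cases k1 : b + 2*σ = 0
      · refine ⟨b - 4*σ, by omega, by omega, by omega, ?_, ?_, ?_⟩
        · have s1 := step (b - 4*σ) (by omega) (by omega)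
          have s2 := step (b - 2*σ) (by omega) (by omega)
          rw [show (b - 4*σ + 2*σ : ℤ) = b - 2*σ by ring] at s1
          rw [show (b - 2*σ + 2*σ : ℤ) = b by ring] at s2
          rw [s1, s2]
        · have s2 := step (b - 2*σ) (by omega) (by omega)
          rw [show (b - 2*σ + 2*σ : ℤ) = b by ring] at s2
          rw [show (b - 4*σ + 2*σ : ℤ) = b - 2*σ by ring, s2]
        · rw [show (b - 4*σ + 4*σ : ℤ) = b by ring]
      · by_cases k2 : b + 4*σ = 0
        · refine ⟨b - 2*σ, by omega, by omega, by omega, ?_, ?_, ?_⟩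
          · have s2 := step (b - 2*σ) (by omega) (by omega)
            rw [show (b - 2*σ + 2*σ : ℤ) = b by ring] at s2
            exact s2
          · rw [show (b - 2*σ + 2*σ : ℤ) = b by ring]
          · have s0 := step b hb k1
            rw [show (b - 2*σ + 4*σ : ℤ) = b + 2*σ by ring]
            exact s0.symm
        · refine ⟨b, hb, k1, k2, rfl, ?_, ?_⟩
          · exact (step b hb k1).symm
          · have s0 := step b hb k1
            have s1 := step (b + 2*σ) k1 (by omega)
            rw [show (b + 2*σ + 2*σ : ℤ) = b + 4*σ by ring] at s1
            rw [← s1, ← s0]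
    obtain ⟨c, hc0, hc2, hc4, E0, E2, E4⟩ := triple
    by_contra hW1
    have hWne : wnf ε h (σ - b) b - 1 ≠ 0 := sub_ne_zero.mpr hW1
    have q0' := wQ σ c hc0
    rw [E0] at q0'
    have q2' := wQ σ (c + 2*σ) (by omega)
    rw [E2] at q2'
    push_cast at q2'
    have q4' := wQ σ (c + 4*σ) (by omega)
    rw [E4] at q4'
    push_cast at q4'
    have F0 := (mul_eq_zero.mp q0').resolve_left hWne
    have F2 := (mul_eq_zero.mp q2').resolve_left hWne
    have F4 := (mul_eq_zero.mp q4').resolve_left hWne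
    have hεσ : ε * (σ:ℂ) ≠ 0 := mul_ne_zero hε0 (Int.cast_ne_zero.mpr hσ)
    have hd02 : (4:ℂ) * (ε * (σ:ℂ)) ≠ 0 := by
      intro hz; exact hεσ (by linear_combination hz / 4)
    have hd04 : (8:ℂ) * (ε * (σ:ℂ)) ≠ 0 := by
      intro hz; exact hεσ (by linear_combination hz / 8)
    have g02 : wnf ε h (σ - b) b * ((1 + 2*ε*((σ:ℂ)-c)) + (1 + 2*ε*((σ:ℂ)-c) - 4*ε*σ))
        + ((2*(1 + 2*ε*(σ:ℂ)) - 2) * wnf ε h (σ - b) b - 2*(1 + 2*ε*(σ:ℂ))) = 0 := by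
      apply mul_left_cancel₀ hd02
      linear_combination F0 - F2
    have g04 : wnf ε h (σ - b) b * ((1 + 2*ε*((σ:ℂ)-c)) + (1 + 2*ε*((σ:ℂ)-c) - 8*ε*σ))
        + ((2*(1 + 2*ε*(σ:ℂ)) - 2) * wnf ε h (σ - b) b - 2*(1 + 2*ε*(σ:ℂ))) = 0 := by
      apply mul_left_cancel₀ hd04
      linear_combination F0 - F4
    have hWzero : wnf ε h (σ - b) b * (4 * (ε * (σ:ℂ))) = 0 := by
      linear_combination g02 - g04
    rcases mul_eq_zero.mp hWzero with hz | hz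
    · exact wne (σ - b) b hb hz
    · exact hd02 hz
  -- w = 1 everywhere
  have wone : ∀ a b : ℤ, b ≠ 0 → wnf ε h a b = 1 := by
    intro a b hb
    by_cases hs : a + b = 0
    · have h0 : wnf ε h 0 b = 1 := by
        have := main b b hb hb
        rw [show (b - b : ℤ) = 0 by ring] at this
        exact this
      have e := wX 0 b hb
      rw [show (-b - 0 : ℤ) = a by omega] at e
      rw [h0] at e
      linear_combination e
    · have := main (a + b) b hb hs
      rw [show (a + b - b : ℤ) = a by ring] at this
      exact this
  -- h = vh
  have hval : ∀ r m : ℤ, h r m = vh ε r m := by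
    intro r m
    by_cases hm : m = 0
    · subst hm; rw [hr0 r]; simp [vh]
    · have w1 := wone r m hm
      have wm := wmul r m
      rw [w1, one_mul] at wm
      unfold vh
      rw [eq_div_iff (by have := hB (m + r); push_cast at this; intro hz; apply this; linear_combination hz)]
      linear_combination -wm
  -- g = vg
  have gval : ∀ m r : ℤ, g m r = vg ε m r := by
    intro m r
    rw [hgh m r, hval r m]
    unfold vh vg
    have hd : (1:ℂ) + 2*ε*((m:ℂ) + r) ≠ 0 := by
      have := hB (m + r); push_cast at this; exact this
    rw [eq_div_iff hd, add_sub_assoc, add_mul, div_mul_cancel₀ _ hd]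
    ring
  -- d = vd
  have dval : ∀ r s : ℤ, d r s = vd ε r s := by
    intro r s
    by_cases hs : s = r
    · subst hs
      rw [drr s]
      unfold vd
      rw [eq_comm, div_eq_one_iff_eq (by have := hA (s + s); push_cast at this; exact this)]
      ring
    · have e := relA r (s - r)
      rw [show (s - r + r : ℤ) = s by ring] at e
      rw [hval r (s - r)] at e
      unfold vh at e
      push_cast at e
      have hsr : (s:ℂ) - r ≠ 0 := by
        intro hz
        apply hs
        have : (s:ℂ) = r := by linear_combination hz
        exact_mod_cast this
      have hd1 : (1:ℂ) + ε * ((s:ℂ) - r) ≠ 0 := by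
        have := hA (s - r); push_cast at this; exact this
      have hd2 : (1:ℂ) + 2*ε*(s:ℂ) ≠ 0 := by
        have := hB s; push_cast at this; exact this
      unfold vd
      rw [eq_div_iff (by have := hA (r + s); push_cast at this; exact this)]
      field_simp [hd2] at e
      rw [neg_inj, div_eq_iff (by intro hz; apply hd2; linear_combination hz)] at e
      apply mul_left_cancel₀ (mul_ne_zero hsr hd1)
      linear_combination ((s:ℂ) - r) * e
  intro m r s
  exact ⟨gval m r, hval r m, dval r s⟩
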